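/- Let B₀ and B₁ be bounded self-adjoint operators on a complex Hilbert space H with B₀² = 1 and B₁² = 1, and for t ∈ ℝ set B(t) = (1 − t)B₀ + tB₁. Let |B₀ + B₁| denote the square root of the positive operator (B₀ + B₁)² (given by continuous functional calculus), and suppose U is a bounded operator on H satisfying U·|B₀ + B₁| = B₀ + B₁ and Uv = 0 for every v ∈ ker(B₀ + B₁). Then U·B(t) = B(1 − t)·U for every t ∈ ℝ; in particular U·B₀ = B₁·U. -/

import Mathlib

set_option synthInstance.maxHeartbeats 1000000
set_option maxHeartbeats 1000000

open StarAlgebra in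
private lemma commute_all_elemental' {A : Type*} [CStarAlgebra A] {a b : A}
    (ha : IsSelfAdjoint a) (hb : Commute b a) {y : A} (hy : y ∈ elemental ℂ a) :
    Commute b y := by
  induction hy using StarAlgebra.elemental.induction_on with
  | self => exact hb
  | star_self => rwa [ha.star_eq]
  | algebraMap r => exact (Algebra.commutes r b).symm
  | add u hu v hv pu pv => exact pu.add_right pv
  | mul u hu v hv pu pv => exact pu.mul_right pv
  | closure s hs hps v hv =>
      have hsub : s ⊆ {x | b * x = x * b} := fun x hx => hps x hx
      exact closure_minimal hsub
        (isClosed_eq (continuous_const.mul continuous_id) (continuous_id.mul continuous_const)) hv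

private lemma cfc_mem_elemental' {A : Type*} [CStarAlgebra A] (a : A) (f : ℂ → ℂ) :
    cfc f a ∈ StarAlgebra.elemental ℂ a := by
  refine cfc_cases (· ∈ StarAlgebra.elemental ℂ a) a f (zero_mem _) fun hf ha => ?_
  rw [cfcHom_eq_of_isStarNormal]
  exact SetLike.coe_mem _

private lemma commute_cfc_sqrt' {H : Type*} [NormedAddCommGroup H]
    [InnerProductSpace ℂ H] [CompleteSpace H] (a b : H →L[ℂ] H)
    (ha : 0 ≤ a) (h : Commute b a) : Commute b (CFC.sqrt a) := by
  have hsa : IsSelfAdjoint a := .of_nonneg ha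
  rw [CFC.sqrt_eq_cfc, cfc_nnreal_eq_real NNReal.sqrt a ha, cfc_real_eq_complex _ hsa]
  exact commute_all_elemental' hsa h (cfc_mem_elemental' a _)

private lemma ker_sq' {H : Type*} [NormedAddCommGroup H]
    [InnerProductSpace ℂ H] [CompleteSpace H] (T : H →L[ℂ] H)
    (hT : IsSelfAdjoint T) {v : H} (h : (T * T) v = 0) : T v = 0 := by
  have h1 : (inner ℂ (T v) (T v) : ℂ) = 0 := by
    have hsym := hT.isSymmetric v (T v)
    simp only [ContinuousLinearMap.coe_coe] at hsym
    rw [hsym]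
    simp only [ContinuousLinearMap.mul_apply] at h
    simp [h]
  exact inner_self_eq_zero.mp h1

theorem partial_isometry_intertwines_path {H : Type*} [NormedAddCommGroup H]
    [InnerProductSpace ℂ H] [CompleteSpace H] (B₀ B₁ : H →L[ℂ] H)
    (h₀s : IsSelfAdjoint B₀) (h₁s : IsSelfAdjoint B₁)
    (h₀ : B₀ * B₀ = 1) (h₁ : B₁ * B₁ = 1)
    (B : ℝ → (H →L[ℂ] H)) (hB : ∀ t : ℝ, B t = (1 - t) • B₀ + t • B₁)
    (U : H →L[ℂ] H) (hU : U * CFC.sqrt ((B₀ + B₁) ^ 2) = B₀ + B₁)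
    (hUker : ∀ v ∈ LinearMap.ker ((B₀ + B₁ : H →L[ℂ] H) : H →ₗ[ℂ] H), U v = 0) :
    (∀ t : ℝ, U * B t = B (1 - t) * U) ∧ U * B₀ = B₁ * U := by
  set S : H →L[ℂ] H := B₀ + B₁ with hSdef
  have hS : IsSelfAdjoint S := h₀s.add h₁s
  have hpos : (0 : H →L[ℂ] H) ≤ S ^ 2 := by
    simpa [sq, hS.star_eq] using star_mul_self_nonneg S
  set A : H →L[ℂ] H := CFC.sqrt (S ^ 2) with hAdef
  have hAnn : (0 : H →L[ℂ] H) ≤ A := CFC.sqrt_nonneg _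
  have hAsa : IsSelfAdjoint A := .of_nonneg hAnn
  have hAsq : A * A = S ^ 2 := CFC.sqrt_mul_sqrt_self _ hpos
  have hUA : U * A = S := hU
  have commB : ∀ t : ℝ, S * B t = B (1 - t) * S := by
    intro t
    simp only [hB, hSdef, mul_add, add_mul, smul_mul_assoc, mul_smul_comm, h₀, h₁,
      sub_sub_cancel]
    module
  have commSq : ∀ t : ℝ, S ^ 2 * B t = B t * S ^ 2 := by
    intro t
    have h2 := commB (1 - t)
    rw [sub_sub_cancel] at h2
    calc S ^ 2 * B t = S * (S * B t) := by rw [sq, mul_assoc]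
    _ = S * (B (1 - t) * S) := by rw [commB t]
    _ = (S * B (1 - t)) * S := by rw [mul_assoc]
    _ = (B t * S) * S := by rw [h2]
    _ = B t * S ^ 2 := by rw [sq, mul_assoc]
  have commA : ∀ t : ℝ, B t * A = A * B t :=
    fun t => commute_cfc_sqrt' (S ^ 2) (B t) hpos (commSq t).symm
  have kerS_of_A : ∀ v : H, A v = 0 → S v = 0 := by
    intro v hv
    refine ker_sq' S hS ?_
    have : (A * A) v = 0 := by
      simp [ContinuousLinearMap.mul_apply, hv]
    rwa [hAsq, sq] at this
  have kerA_of_S : ∀ v : H, S v = 0 → A v = 0 := by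
    intro v hv
    refine ker_sq' A hAsa ?_
    rw [hAsq, sq]
    simp [ContinuousLinearMap.mul_apply, hv]
  have key : ∀ t : ℝ, U * B t = B (1 - t) * U := by
    intro t
    set T : H →L[ℂ] H := U * B t - B (1 - t) * U with hTdef
    have hTA : T * A = 0 := by
      have heq : (U * B t) * A = (B (1 - t) * U) * A := by
        calc (U * B t) * A = U * (B t * A) := mul_assoc _ _ _
        _ = U * (A * B t) := by rw [commA t]
        _ = (U * A) * B t := (mul_assoc _ _ _).symm
        _ = S * B t := by rw [hUA]
        _ = B (1 - t) * S := commB t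
        _ = B (1 - t) * (U * A) := by rw [hUA]
        _ = (B (1 - t) * U) * A := (mul_assoc _ _ _).symm
      rw [hTdef, sub_mul, heq, sub_self]
    have hTrange : ∀ v : H, T (A v) = 0 := by
      intro v
      have := congrArg (fun X : H →L[ℂ] H => X v) hTA
      simpa [ContinuousLinearMap.mul_apply] using this
    have hTK : LinearMap.ker (S : H →ₗ[ℂ] H) ≤ LinearMap.ker (T : H →ₗ[ℂ] H) := by
      intro v hv
      rw [LinearMap.mem_ker, ContinuousLinearMap.coe_coe] at hv ⊢
      have hBv : S (B t v) = 0 := by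
        have := congrArg (fun X : H →L[ℂ] H => X v) (commB t)
        simp only [ContinuousLinearMap.mul_apply] at this
        rw [this, hv, map_zero]
      have hU1 : U (B t v) = 0 := hUker _ (LinearMap.mem_ker.mpr hBv)
      have hU2 : U v = 0 := hUker _ (LinearMap.mem_ker.mpr hv)
      simp [hTdef, ContinuousLinearMap.sub_apply, ContinuousLinearMap.mul_apply, hU1, hU2]
    have hrangeperp : (LinearMap.range (A : H →ₗ[ℂ] H))ᗮ = LinearMap.ker (S : H →ₗ[ℂ] H) := by
      ext x
      simp only [Submodule.mem_orthogonal, LinearMap.mem_range, LinearMap.mem_ker,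
        forall_exists_index, forall_apply_eq_imp_iff]
      constructor
      · intro hx
        refine kerS_of_A x ?_
        have h1 : (inner ℂ (A x) (A x) : ℂ) = 0 := by
          have hsym := hAsa.isSymmetric (A x) x
          simp only [ContinuousLinearMap.coe_coe] at hsym
          rw [← hsym]
          exact hx (A x)
        exact inner_self_eq_zero.mp h1
      · intro hx v
        have hAx : A x = 0 := kerA_of_S x hx
        have hsym := hAsa.isSymmetric v x
        simp only [ContinuousLinearMap.coe_coe] at hsym
        rw [ContinuousLinearMap.coe_coe, hsym, hAx, inner_zero_right]
    haveI : CompleteSpace (LinearMap.ker (S : H →ₗ[ℂ] H)) :=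
      (ContinuousLinearMap.isClosed_ker S).completeSpace_coe
    have hperpK : (LinearMap.ker (S : H →ₗ[ℂ] H))ᗮ ≤ LinearMap.ker (T : H →ₗ[ℂ] H) := by
      rw [← hrangeperp, Submodule.orthogonal_orthogonal_eq_closure]
      refine Submodule.topologicalClosure_minimal _ ?_ (ContinuousLinearMap.isClosed_ker T)
      rintro _ ⟨v, rfl⟩
      exact LinearMap.mem_ker.mpr (hTrange v)
    have htop : (⊤ : Submodule ℂ H) ≤ LinearMap.ker (T : H →ₗ[ℂ] H) := by
      rw [← Submodule.sup_orthogonal_of_hasOrthogonalProjection (K := LinearMap.ker (S : H →ₗ[ℂ] H))]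
      exact sup_le hTK hperpK
    have hT0 : T = 0 := by
      ext v
      rw [ContinuousLinearMap.zero_apply]
      exact LinearMap.mem_ker.mp (htop Submodule.mem_top)
    exact sub_eq_zero.mp hT0
  refine ⟨key, ?_⟩
  have h0 : B 0 = B₀ := by rw [hB 0, sub_zero, one_smul, zero_smul, add_zero]
  have h1' : B 1 = B₁ := by rw [hB 1, sub_self, one_smul, zero_smul, zero_add]
  have hk := key 0
  rw [show (1:ℝ) - 0 = 1 by norm_num, h0, h1'] at hk
  exact hk
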